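/- arXiv:2101.01110 — 2 statements merged into one kernel-verified Lean document; each statement's English description precedes it below -/
import Mathlib

section
/- With the data of the free field construction of W_{q,t}(A(M,N)) as in the context, for every 1 ≤ i ≤ L+1 and every 1 ≤ j ≤ L, one has Σ_{k=1}^{L} λ_{i,k}(0) · A_{k,j}(0) = log(q_{i,j}/p_{i,j}); explicitly, the sum equals 0 if i ∉ {j, j+1}; equals −2·log x if i = j and ε_j = 1, and (2 − 2r)·log x if i = j and ε_j = 0; and equals 2·log x if i = j+1 and ε_{j+1} = 1, and (2r − 2)·log x if i = j+1 and ε_{j+1} = 0. (This states that the zero-mode coefficients (3.13) of Theorem 3.1 solve the mutual-locality linear system (3.17) of Lemma 3.5.) -/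
/-- The entry `A_{k,l}(0)` (1-based indices) of the Gram matrix of the free field
construction of `W_{q,t}(A(M,N))`. -/
noncomputable def A0ent (r : ℝ) (ε : ℕ → Bool) (k l : ℕ) : ℝ :=
  if k = l then
    (if ε k ≠ ε (k + 1) then 1 else if ε (k + 1) then 2 / r else 2 * (r - 1) / r)
  else if l = k + 1 then (if ε l then -1 / r else (1 - r) / r)
  else if k = l + 1 then (if ε k then -1 / r else (1 - r) / r)
  else 0

/-- `d_j = r - 1` if `ε_j = 1` and `d_j = 1` if `ε_j = 0`. -/
noncomputable def dfun (r : ℝ) (ε : ℕ → Bool) (j : ℕ) : ℝ := if ε j then r - 1 else 1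

/-- `D(k,l) = Σ_{j=k+1}^{l+1} d_j` (and `D(k,l) = 0` for `k > l`). -/
noncomputable def Dfun (r : ℝ) (ε : ℕ → Bool) (k l : ℕ) : ℝ :=
  ∑ j ∈ Finset.Icc (k + 1) (l + 1), dfun r ε j

/-- The zero-mode coefficient `λ_{i,j}(0)` of Theorem 3.1 (formula (3.13)),
with `a = D(0,L)`. -/
noncomputable def lam0 (L : ℕ) (r x : ℝ) (ε : ℕ → Bool) (i j : ℕ) : ℝ :=
  if j < i then 2 * r * Real.log x / Dfun r ε 0 L * Dfun r ε 0 (j - 1)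
  else -(2 * r * Real.log x / Dfun r ε 0 L) * Dfun r ε j L

/-- The parameter `q_{i,j}` of Theorem 3.1 (nontrivial only for `i ∈ {j, j+1}`;
for other `i` one has `q_{i,j} = p_{i,j}`, here both normalized to `1`). -/
noncomputable def qijD (x r : ℝ) (ε : ℕ → Bool) (i j : ℕ) : ℝ :=
  if i = j then x ^ Dfun r ε 1 (j - 1)
  else if i = j + 1 then x ^ (2 * r + Dfun r ε 1 (j - 1))
  else 1

/-- The parameter `p_{i,j}` of Theorem 3.1 (nontrivial only for `i ∈ {j, j+1}`;
for other `i` one has `p_{i,j} = q_{i,j}`, here both normalized to `1`). -/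
noncomputable def pijD (x r : ℝ) (ε : ℕ → Bool) (i j : ℕ) : ℝ :=
  if i = j then
    (if j = 1 then (if ε 1 then x ^ (2 : ℝ) else x ^ (2 * r - 2))
     else x ^ Dfun r ε 1 (j - 2) * (if ε j then x ^ (r + 1) else x ^ (2 * r - 1)))
  else if i = j + 1 then
    x ^ Dfun r ε 1 (j - 1) * (if ε (j + 1) then x ^ (2 * r - 2) else x ^ (2 : ℝ))
  else 1

lemma dfun_pos {r : ℝ} (hr : 1 < r) (ε : ℕ → Bool) (j : ℕ) : 0 < dfun r ε j := by
  unfold dfun; split <;> linarith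

lemma Dfun_pos {r : ℝ} (hr : 1 < r) (ε : ℕ → Bool) {k l : ℕ} (h : k ≤ l) :
    0 < Dfun r ε k l :=
  Finset.sum_pos (fun j _ => dfun_pos hr ε j) (by rw [Finset.nonempty_Icc]; omega)

lemma Dfun_split (r : ℝ) (ε : ℕ → Bool) {j L : ℕ} (hj : 1 ≤ j) (hjL : j ≤ L + 1) :
    Dfun r ε j L = Dfun r ε 0 L - Dfun r ε 0 (j - 1) := by
  have h : Dfun r ε 0 (j - 1) + Dfun r ε j L = Dfun r ε 0 L := by
    simp only [Dfun, Finset.Icc_add_one_left_eq_Ioc]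
    have hj1 : j - 1 + 1 = j := by omega
    rw [hj1]
    exact Finset.sum_Ioc_consecutive _ (Nat.zero_le j) (by omega)
  linarith

lemma Dfun_succ0 (r : ℝ) (ε : ℕ → Bool) (l : ℕ) :
    Dfun r ε 0 (l + 1) = Dfun r ε 0 l + dfun r ε (l + 2) := by
  simp only [Dfun]
  rw [show l + 1 + 1 = l + 2 by omega, Finset.sum_Icc_succ_top (by omega)]

lemma Dfun_succ1 (r : ℝ) (ε : ℕ → Bool) (l : ℕ) :
    Dfun r ε 1 (l + 1) = Dfun r ε 1 l + dfun r ε (l + 2) := by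
  simp only [Dfun]
  rw [show l + 1 + 1 = l + 2 by omega, Finset.sum_Icc_succ_top (by omega)]

lemma Dfun_zero (r : ℝ) (ε : ℕ → Bool) : Dfun r ε 0 0 = dfun r ε 1 := by simp [Dfun]

lemma Dfun_bot (r : ℝ) (ε : ℕ → Bool) : Dfun r ε 1 0 = 0 := by
  simp [Dfun, Finset.Icc_eq_empty (by omega : ¬ (2:ℕ) ≤ 1)]

lemma lam0_lt {L : ℕ} {r x : ℝ} {ε : ℕ → Bool} {i k : ℕ} (h : k < i) :
    lam0 L r x ε i k = 2 * r * Real.log x / Dfun r ε 0 L * Dfun r ε 0 (k - 1) := by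
  simp only [lam0]; rw [if_pos h]

lemma lam0_ge {L : ℕ} {r x : ℝ} {ε : ℕ → Bool} {i k : ℕ} (h : ¬ k < i) :
    lam0 L r x ε i k = -(2 * r * Real.log x / Dfun r ε 0 L) * Dfun r ε k L := by
  simp only [lam0]; rw [if_neg h]

lemma A0ent_sub (r : ℝ) (ε : ℕ → Bool) {j : ℕ} (hj : 1 ≤ j) :
    A0ent r ε (j - 1) j = if ε j then -1 / r else (1 - r) / r := by
  simp only [A0ent]
  rw [if_neg (by omega), if_pos (by omega)]

lemma A0ent_diag (r : ℝ) (ε : ℕ → Bool) (j : ℕ) :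
    A0ent r ε j j =
      if ε j ≠ ε (j + 1) then 1 else if ε (j + 1) then 2 / r else 2 * (r - 1) / r := by
  simp only [A0ent, eq_self_iff_true, if_true]

lemma A0ent_super (r : ℝ) (ε : ℕ → Bool) (j : ℕ) :
    A0ent r ε (j + 1) j = if ε (j + 1) then -1 / r else (1 - r) / r := by
  simp only [A0ent]
  simp only [A0ent, eq_self_iff_true, if_true]
  rw [if_neg (by omega), if_neg (by omega)]

lemma A0ent_zero (r : ℝ) (ε : ℕ → Bool) {k l : ℕ} (h1 : k ≠ l) (h2 : l ≠ k+1) (h3 : k ≠ l+1) :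
    A0ent r ε k l = 0 := by simp [A0ent, h1, h2, h3]

lemma tri_sum (r : ℝ) (ε : ℕ → Bool) {L j : ℕ} (hj : 1 ≤ j) (hjL : j ≤ L) (f : ℕ → ℝ) :
    ∑ k ∈ Finset.Icc 1 L, f k * A0ent r ε k j =
      (if 2 ≤ j then f (j-1) * A0ent r ε (j-1) j else 0)
      + f j * A0ent r ε j j
      + (if j < L then f (j+1) * A0ent r ε (j+1) j else 0) := by
  have hz : ∀ k ∈ Finset.Icc 1 L,
      k ∉ (Finset.Icc 1 L).filter (fun k => k = j - 1 ∨ k = j ∨ k = j + 1) →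
      f k * A0ent r ε k j = 0 := by
    intro k hk hk'
    simp only [Finset.mem_filter, Finset.mem_Icc] at hk hk'
    push_neg at hk'
    obtain ⟨h1, h2, h3⟩ := hk' hk
    rw [A0ent_zero r ε h2 (by omega) (by omega), mul_zero]
  rw [← Finset.sum_subset (Finset.filter_subset _ _) hz]
  rcases Nat.lt_or_ge j 2 with hj2 | hj2
  · have hj1 : j = 1 := by omega
    subst hj1
    rcases Nat.lt_or_ge 1 L with hL | hL
    · have : (Finset.Icc 1 L).filter (fun k => k = 0 ∨ k = 1 ∨ k = 2) = {1, 2} := by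
        ext k; simp [Finset.mem_Icc]; omega
      rw [this]
      simp [Finset.sum_insert, hL]
    · have hL1 : L = 1 := by omega
      subst hL1
      have : (Finset.Icc 1 1).filter (fun k => k = 0 ∨ k = 1 ∨ k = 2) = {1} := by decide
      rw [this]; simp
  · rcases Nat.lt_or_ge j L with hL | hL
    · have : (Finset.Icc 1 L).filter (fun k => k = j - 1 ∨ k = j ∨ k = j + 1)
          = {j - 1, j, j + 1} := by
        ext k; simp [Finset.mem_Icc]; omega
      rw [this, Finset.sum_insert (by simp only [Finset.mem_insert, Finset.mem_singleton]; omega), Finset.sum_insert (by simp only [Finset.mem_insert, Finset.mem_singleton]; omega),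
        Finset.sum_singleton, if_pos hj2, if_pos hL]
      ring
    · have hjL' : j = L := by omega
      subst hjL'
      have : (Finset.Icc 1 j).filter (fun k => k = j - 1 ∨ k = j ∨ k = j + 1)
          = {j - 1, j} := by
        ext k; simp [Finset.mem_Icc]; omega
      rw [this, Finset.sum_insert (by simp only [Finset.mem_insert, Finset.mem_singleton]; omega), Finset.sum_singleton,
        if_pos hj2, if_neg (by omega : ¬ j < j)]
      ring

set_option maxHeartbeats 1000000 in
lemma key_sum (L : ℕ) (r x : ℝ) (hr : 1 < r) (ε : ℕ → Bool)
    {i j : ℕ} (hi : 1 ≤ i) (hi2 : i ≤ L + 1) (hj : 1 ≤ j) (hjL : j ≤ L) :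
    ∑ k ∈ Finset.Icc 1 L, lam0 L r x ε i k * A0ent r ε k j =
      if i = j then (if ε j then -2 * Real.log x else (2 - 2 * r) * Real.log x)
      else if i = j + 1 then
        (if ε (j + 1) then 2 * Real.log x else (2 * r - 2) * Real.log x)
      else 0 := by
  have hr0 : r ≠ 0 := by intro h; rw [h] at hr; linarith
  have ha : Dfun r ε 0 L ≠ 0 := ne_of_gt (Dfun_pos hr ε (Nat.zero_le L))
  rw [tri_sum r ε hj hjL]
  rcases Nat.lt_or_ge j 2 with hjlt | hj2
  · -- j = 1
    obtain rfl : j = 1 := by omega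
    rw [if_neg (by omega : ¬ 2 ≤ 1)]
    have hs1 : Dfun r ε 1 L = Dfun r ε 0 L - Dfun r ε 0 0 :=
      Dfun_split r ε (by omega) (by omega)
    rcases Nat.lt_or_ge 1 L with hL2 | hL1
    · -- j = 1 < L
      rw [if_pos hL2]
      have hs2 : Dfun r ε 2 L = Dfun r ε 0 L - Dfun r ε 0 1 :=
        Dfun_split r ε (by omega) (by omega)
      have hp1 : Dfun r ε 0 1 = Dfun r ε 0 0 + dfun r ε 2 := Dfun_succ0 r ε 0
      rcases Nat.lt_trichotomy i 2 with hI | hI | hI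
      · -- i = 1 = j
        obtain rfl : i = 1 := by omega
        rw [if_pos rfl]
        rw [lam0_ge (by omega), lam0_ge (by omega), A0ent_diag, A0ent_super]
        simp only [show (1:ℕ) + 1 = 2 from rfl]
        rw [hs1, hs2, hp1, Dfun_zero]
        rcases hε1 : ε 1 <;> rcases hε2 : ε 2 <;>
          simp only [hε1, hε2, dfun, if_true, if_false, ne_eq, Bool.true_eq_false,
            Bool.false_eq_true, not_false_eq_true, not_true_eq_false, ite_true, ite_false] <;>
          field_simp <;> ring
      · -- i = 2 = j + 1
        obtain rfl : i = 2 := by omega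
        rw [if_neg (by omega), if_pos rfl]
        rw [lam0_lt (by omega), lam0_ge (by omega), A0ent_diag, A0ent_super]
        simp only [show (1:ℕ) + 1 = 2 from rfl, show (1:ℕ) - 1 = 0 from rfl]
        rw [hs2, hp1, Dfun_zero]
        rcases hε1 : ε 1 <;> rcases hε2 : ε 2 <;>
          simp only [hε1, hε2, dfun, if_true, if_false, ne_eq, Bool.true_eq_false,
            Bool.false_eq_true, not_false_eq_true, not_true_eq_false, ite_true, ite_false] <;>
          field_simp <;> ring
      · -- i ≥ 3
        rw [if_neg (by omega), if_neg (by omega)]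
        rw [lam0_lt (by omega), lam0_lt (by omega), A0ent_diag, A0ent_super]
        simp only [show (1:ℕ) + 1 = 2 from rfl, show (1:ℕ) - 1 = 0 from rfl,
          show (2:ℕ) - 1 = 1 from rfl]
        rw [hp1, Dfun_zero]
        rcases hε1 : ε 1 <;> rcases hε2 : ε 2 <;>
          simp only [hε1, hε2, dfun, if_true, if_false, ne_eq, Bool.true_eq_false,
            Bool.false_eq_true, not_false_eq_true, not_true_eq_false, ite_true, ite_false] <;>
          field_simp <;> ring
    · -- j = L = 1
      obtain rfl : L = 1 := by omega
      rw [if_neg (by omega : ¬ (1:ℕ) < 1)]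
      have hD11 : Dfun r ε 1 1 = dfun r ε 2 := by
        simp [Dfun]
      have hD01 : Dfun r ε 0 1 = dfun r ε 1 + dfun r ε 2 := by
        rw [Dfun_succ0 r ε 0, Dfun_zero]
      have n1 : r - 1 + (r - 1) ≠ 0 := by intro h; linarith
      have n2 : r - 1 + 1 ≠ 0 := by intro h; linarith
      have n3 : (1 : ℝ) + (r - 1) ≠ 0 := by intro h; linarith
      have n4 : (1 : ℝ) + 1 ≠ 0 := by norm_num
      have n5 : r - 1 ≠ 0 := by intro h; linarith
      rcases Nat.lt_trichotomy i 2 with hI | hI | hI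
      · -- i = 1 = j
        obtain rfl : i = 1 := by omega
        rw [if_pos rfl]
        rw [lam0_ge (by omega), A0ent_diag]
        simp only [show (1:ℕ) + 1 = 2 from rfl]
        rw [hD11, hD01]
        rcases hε1 : ε 1 <;> rcases hε2 : ε 2 <;>
          simp only [hε1, hε2, dfun, if_true, if_false, ne_eq, Bool.true_eq_false,
            Bool.false_eq_true, not_false_eq_true, not_true_eq_false, ite_true, ite_false] <;>
          field_simp [n1, n2, n3, n4, n5] <;> ring
      · -- i = 2 = j + 1
        obtain rfl : i = 2 := by omega
        rw [if_neg (by omega), if_pos rfl]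
        rw [lam0_lt (by omega), A0ent_diag]
        simp only [show (1:ℕ) + 1 = 2 from rfl, show (1:ℕ) - 1 = 0 from rfl]
        rw [Dfun_zero, hD01]
        rcases hε1 : ε 1 <;> rcases hε2 : ε 2 <;>
          simp only [hε1, hε2, dfun, if_true, if_false, ne_eq, Bool.true_eq_false,
            Bool.false_eq_true, not_false_eq_true, not_true_eq_false, ite_true, ite_false] <;>
          field_simp [n1, n2, n3, n4, n5] <;> ring
      · omega
  · -- j ≥ 2
    obtain ⟨m, rfl⟩ : ∃ m, j = m + 2 := ⟨j - 2, by omega⟩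
    rw [if_pos (by omega : 2 ≤ m + 2)]
    have hs1 : Dfun r ε (m + 1) L = Dfun r ε 0 L - Dfun r ε 0 m :=
      Dfun_split r ε (by omega) (by omega)
    have hs2 : Dfun r ε (m + 2) L = Dfun r ε 0 L - Dfun r ε 0 (m + 1) :=
      Dfun_split r ε (by omega) (by omega)
    have hp1 : Dfun r ε 0 (m + 1) = Dfun r ε 0 m + dfun r ε (m + 2) := Dfun_succ0 r ε m
    have hAsub : A0ent r ε (m + 1) (m + 2) = (if ε (m + 2) then -1 / r else (1 - r) / r) :=
      A0ent_sub r ε (j := m + 2) (by omega)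
    have clean1 : m + 2 - 1 = m + 1 := by omega
    have clean2 : m + 1 - 1 = m := by omega
    have clean3 : m + 2 + 1 = m + 3 := by omega
    have clean4 : m + 2 + 1 - 1 = m + 2 := by omega
    simp only [clean1]
    rcases Nat.lt_or_ge (m + 2) L with hL2 | hL1
    · -- j < L
      rw [if_pos hL2]
      have hs3 : Dfun r ε (m + 3) L = Dfun r ε 0 L - Dfun r ε 0 (m + 2) :=
        Dfun_split r ε (by omega) (by omega)
      have hp2 : Dfun r ε 0 (m + 2) = Dfun r ε 0 (m + 1) + dfun r ε (m + 3) :=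
        Dfun_succ0 r ε (m + 1)
      rcases Nat.lt_trichotomy i (m + 2) with hI | hI | hI
      · -- i ≤ j - 1
        rw [if_neg (by omega), if_neg (by omega)]
        rw [lam0_ge (by omega), lam0_ge (by omega), lam0_ge (by omega),
          hAsub, A0ent_diag, A0ent_super]
        simp only [clean1, clean2, clean3, clean4]
        rw [hs1, hs2, hs3, hp2, hp1]
        rcases hε1 : ε (m + 2) <;> rcases hε2 : ε (m + 3) <;>
          simp only [hε1, hε2, dfun, if_true, if_false, ne_eq, Bool.true_eq_false,
            Bool.false_eq_true, not_false_eq_true, not_true_eq_false, ite_true, ite_false] <;>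
          field_simp <;> ring
      · -- i = j
        obtain rfl : i = m + 2 := by omega
        rw [if_pos rfl]
        rw [lam0_lt (by omega), lam0_ge (by omega), lam0_ge (by omega),
          hAsub, A0ent_diag, A0ent_super]
        simp only [clean1, clean2, clean3, clean4]
        rw [hs2, hs3, hp2, hp1]
        rcases hε1 : ε (m + 2) <;> rcases hε2 : ε (m + 3) <;>
          simp only [hε1, hε2, dfun, if_true, if_false, ne_eq, Bool.true_eq_false,
            Bool.false_eq_true, not_false_eq_true, not_true_eq_false, ite_true, ite_false] <;>
          field_simp <;> ring
      · rcases Nat.lt_or_ge (m + 3) i with hI2 | hI2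
        · -- i ≥ j + 2
          rw [if_neg (by omega), if_neg (by omega)]
          rw [lam0_lt (by omega), lam0_lt (by omega), lam0_lt (by omega),
            hAsub, A0ent_diag, A0ent_super]
          simp only [clean1, clean2, clean3, clean4]
          rw [hp2, hp1]
          rcases hε1 : ε (m + 2) <;> rcases hε2 : ε (m + 3) <;>
            simp only [hε1, hε2, dfun, if_true, if_false, ne_eq, Bool.true_eq_false,
              Bool.false_eq_true, not_false_eq_true, not_true_eq_false, ite_true, ite_false] <;>
            field_simp <;> ring
        · -- i = j + 1
          obtain rfl : i = m + 3 := by omega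
          rw [if_neg (by omega), if_pos (by omega : m + 3 = m + 2 + 1)]
          rw [lam0_lt (by omega), lam0_lt (by omega), lam0_ge (by omega),
            hAsub, A0ent_diag, A0ent_super]
          simp only [clean1, clean2, clean3, clean4]
          rw [hs3, hp2, hp1]
          rcases hε1 : ε (m + 2) <;> rcases hε2 : ε (m + 3) <;>
            simp only [hε1, hε2, dfun, if_true, if_false, ne_eq, Bool.true_eq_false,
              Bool.false_eq_true, not_false_eq_true, not_true_eq_false, ite_true, ite_false] <;>
            field_simp <;> ring
    · -- j = L
      obtain rfl : L = m + 2 := by omega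
      rw [if_neg (by omega : ¬ m + 2 < m + 2)]
      have hq1 : Dfun r ε 0 (m + 1) = Dfun r ε 0 (m + 2) - dfun r ε (m + 3) := by
        have := Dfun_succ0 r ε (m + 1); linarith
      have hq2 : Dfun r ε 0 m
          = Dfun r ε 0 (m + 2) - dfun r ε (m + 3) - dfun r ε (m + 2) := by
        have h1 := Dfun_succ0 r ε (m + 1); have h2 := Dfun_succ0 r ε m; linarith
      rcases Nat.lt_trichotomy i (m + 2) with hI | hI | hI
      · -- i ≤ j - 1
        rw [if_neg (by omega), if_neg (by omega)]
        rw [lam0_ge (by omega), lam0_ge (by omega), hAsub, A0ent_diag]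
        simp only [clean1, clean2, clean3, clean4]
        rw [hs1, hs2, hq1, hq2]
        rcases hε1 : ε (m + 2) <;> rcases hε2 : ε (m + 3) <;>
          simp only [hε1, hε2, dfun, if_true, if_false, ne_eq, Bool.true_eq_false,
            Bool.false_eq_true, not_false_eq_true, not_true_eq_false, ite_true, ite_false] <;>
          field_simp <;> ring
      · -- i = j
        obtain rfl : i = m + 2 := by omega
        rw [if_pos rfl]
        rw [lam0_lt (by omega), lam0_ge (by omega), hAsub, A0ent_diag]
        simp only [clean1, clean2, clean3, clean4]
        rw [hs2, hq1, hq2]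
        rcases hε1 : ε (m + 2) <;> rcases hε2 : ε (m + 3) <;>
          simp only [hε1, hε2, dfun, if_true, if_false, ne_eq, Bool.true_eq_false,
            Bool.false_eq_true, not_false_eq_true, not_true_eq_false, ite_true, ite_false] <;>
          field_simp <;> ring
      · -- i = j + 1 = L + 1
        obtain rfl : i = m + 3 := by omega
        rw [if_neg (by omega), if_pos (by omega : m + 3 = m + 2 + 1)]
        rw [lam0_lt (by omega), lam0_lt (by omega), hAsub, A0ent_diag]
        simp only [clean1, clean2, clean3, clean4]
        rw [hq1, hq2]
        rcases hε1 : ε (m + 2) <;> rcases hε2 : ε (m + 3) <;>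
          simp only [hε1, hε2, dfun, if_true, if_false, ne_eq, Bool.true_eq_false,
            Bool.false_eq_true, not_false_eq_true, not_true_eq_false, ite_true, ite_false] <;>
          field_simp <;> ring

lemma log_rpow_div {x : ℝ} (hx : 0 < x) (s t : ℝ) :
    Real.log (x ^ s / x ^ t) = (s - t) * Real.log x := by
  rw [← Real.rpow_sub hx, Real.log_rpow hx]


/-- The zero-mode coefficients (3.13) of Theorem 3.1 solve the mutual-locality linear
system (3.17) of Lemma 3.5: `Σ_{k=1}^{L} λ_{i,k}(0) A_{k,j}(0) = log(q_{i,j}/p_{i,j})`,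
with the explicit values `0` for `i ∉ {j, j+1}`, `-2 log x` resp. `(2-2r) log x` for
`i = j` (according to `ε_j = 1` resp. `ε_j = 0`), and `2 log x` resp. `(2r-2) log x` for
`i = j+1` (according to `ε_{j+1} = 1` resp. `ε_{j+1} = 0`). -/
theorem statement12 (L : ℕ) (hL : 1 ≤ L) (r x : ℝ) (hr : 1 < r) (hx0 : 0 < x) (hx1 : x < 1)
    (ε : ℕ → Bool) :
    ∀ i ∈ Finset.Icc 1 (L + 1), ∀ j ∈ Finset.Icc 1 L,
      (∑ k ∈ Finset.Icc 1 L, lam0 L r x ε i k * A0ent r ε k j) =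
          Real.log (qijD x r ε i j / pijD x r ε i j) ∧
        (i ≠ j → i ≠ j + 1 →
          (∑ k ∈ Finset.Icc 1 L, lam0 L r x ε i k * A0ent r ε k j) = 0) ∧
        (i = j →
          (∑ k ∈ Finset.Icc 1 L, lam0 L r x ε i k * A0ent r ε k j) =
            (if ε j then -2 * Real.log x else (2 - 2 * r) * Real.log x)) ∧
        (i = j + 1 →
          (∑ k ∈ Finset.Icc 1 L, lam0 L r x ε i k * A0ent r ε k j) =
            (if ε (j + 1) then 2 * Real.log x else (2 * r - 2) * Real.log x)) := by
  intro i hi j hj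
  simp only [Finset.mem_Icc] at hi hj
  have key := key_sum L r x hr ε hi.1 hi.2 hj.1 hj.2
  refine ⟨?_, ?_, ?_, ?_⟩
  · rw [key]
    by_cases h1 : i = j
    · subst h1
      rw [if_pos rfl, qijD, pijD, if_pos rfl, if_pos rfl]
      rcases Nat.lt_or_ge i 2 with hi1 | hi2
      · obtain rfl : i = 1 := by omega
        rw [if_pos rfl]
        simp only [show (1:ℕ) - 1 = 0 from rfl]
        rw [Dfun_bot]
        rcases hε : ε 1 <;>
          simp only [hε, if_true, if_false, ite_true, ite_false, Bool.false_eq_true] <;>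
          rw [log_rpow_div hx0] <;> ring
      · obtain ⟨m, rfl⟩ : ∃ m, i = m + 2 := ⟨i - 2, by omega⟩
        rw [if_neg (show ¬ (m + 2) = 1 by omega)]
        simp only [show m + 2 - 1 = m + 1 from rfl, show m + 2 - 2 = m from rfl]
        rw [Dfun_succ1 r ε m]
        rcases hε : ε (m + 2) <;>
          simp only [hε, dfun, if_true, if_false, ite_true, ite_false, Bool.false_eq_true] <;>
          rw [← Real.rpow_add hx0, log_rpow_div hx0] <;> ring
    · by_cases h2 : i = j + 1
      · subst h2
        rw [if_neg h1, if_pos rfl, qijD, pijD, if_neg h1, if_neg h1, if_pos rfl, if_pos rfl]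
        rcases hε : ε (j + 1) <;>
          simp only [hε, if_true, if_false, ite_true, ite_false, Bool.false_eq_true] <;>
          rw [← Real.rpow_add hx0, log_rpow_div hx0] <;> ring
      · rw [if_neg h1, if_neg h2]
        simp [qijD, pijD, h1, h2]
  · intro h1 h2
    rw [key, if_neg h1, if_neg h2]
  · intro h; subst h
    rw [key, if_pos rfl]
  · intro h; subst h
    rw [key, if_neg (by omega), if_pos rfl]
end

section
/- Let q be a real number with 0 < q < 1, let M ≥ N ≥ 0 be integers with M + N ≥ 1, let 1 ≤ i ≤ j be integers, and let m ≥ 1 be an integer. For β ∈ (0,1) set r = 1/(1−β), x = q^{(1−β)/2}, and a = (N+1)r + M − N, and define c_m(β) = (1/m)·[(r−1)m]_x [rm]_x [i m]_x [(a−j)m]_x (x − x^{−1})²/([m]_x [a m]_x) (the m-th coefficient of the exponent series defining the structure function f_{i,j}(z; a) of W_{q,t}(A(M,N))). Then lim_{β→0⁺} c_m(β)/β = −(log q)·(q − q^{−1})·[i m/2]_q [ (j − M − 1)m/2 ]_q / [ (M+1)m/2 ]_q, where for real s, [s]_q = (q^{s} − q^{−s})/(q − q^{−1}). (This is the β-expansion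 f_{i,j}(z; a) = 1 + β·log q·Σ_{m≥1} ([i m/2]_q [(j−M−1)m/2]_q/[(M+1)m/2]_q)(q − q^{−1}) z^m + O(β²) underlying the classical limit to the q-Poisson W-superalgebra in Proposition 4.9.) -/
open Filter Topology

/-- The q-integer `[n]_x = (x^n - x^{-n})/(x - x^{-1})`, with real powers of `x`. -/
noncomputable def qint (x n : ℝ) : ℝ := (x ^ n - x ^ (-n)) / (x - x⁻¹)

noncomputable def Efun (L s : ℝ) : ℝ := Real.exp (L * s) - Real.exp (-(L * s))

lemma Efun_ne_zero {L s : ℝ} (hL : L ≠ 0) (hs : s ≠ 0) : Efun L s ≠ 0 := by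
  unfold Efun
  rw [sub_ne_zero, Ne, Real.exp_eq_exp]
  intro h
  have : L * s = 0 := by linarith
  rcases mul_eq_zero.mp this with h | h <;> [exact hL h; exact hs h]

lemma Efun_neg (L s : ℝ) : Efun L (-s) = - Efun L s := by
  unfold Efun; ring_nf

lemma Efun_zero (L : ℝ) : Efun L 0 = 0 := by simp [Efun]

lemma Efun_continuous (L : ℝ) : Continuous (Efun L) := by
  unfold Efun; fun_prop

lemma qint_rpow (q : ℝ) (hq : 0 < q) (t n : ℝ) :
    qint (q ^ t) n = Efun (Real.log q) (t * n) / Efun (Real.log q) t := by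
  unfold qint Efun
  rw [← Real.rpow_mul hq.le, ← Real.rpow_mul hq.le, ← Real.rpow_neg hq.le,
    Real.rpow_def_of_pos hq (t*n), Real.rpow_def_of_pos hq (t*(-n)),
    Real.rpow_def_of_pos hq t, Real.rpow_def_of_pos hq (-t)]
  ring_nf

lemma rpow_sub_inv (q : ℝ) (hq : 0 < q) (t : ℝ) :
    q ^ t - (q ^ t)⁻¹ = Efun (Real.log q) t := by
  unfold Efun
  rw [← Real.rpow_neg hq.le, Real.rpow_def_of_pos hq, Real.rpow_def_of_pos hq]
  ring_nf

lemma qint_base (q : ℝ) (hq : 0 < q) (n : ℝ) :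
    qint q n = Efun (Real.log q) n / Efun (Real.log q) 1 := by
  have h := qint_rpow q hq 1 n
  rwa [Real.rpow_one, one_mul] at h

lemma base_sub_inv (q : ℝ) (hq : 0 < q) :
    q - q⁻¹ = Efun (Real.log q) 1 := by
  have h := rpow_sub_inv q hq 1
  rwa [Real.rpow_one] at h

/-- The β-expansion underlying the classical limit to the q-Poisson W-superalgebra
(Proposition 4.9): with `r = 1/(1-β)`, `x = q^{(1-β)/2}`, `a = (N+1)r + M - N`,
the `m`-th exponent coefficient `c_m(β)` of the structure function `f_{i,j}(z;a)` of
`W_{q,t}(A(M,N))` satisfies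
`lim_{β→0⁺} c_m(β)/β = -(log q)(q - q⁻¹)[im/2]_q[(j-M-1)m/2]_q/[(M+1)m/2]_q`. -/
theorem statement13 (q : ℝ) (hq0 : 0 < q) (hq1 : q < 1) (M N : ℕ) (hNM : N ≤ M)
    (hMN : 1 ≤ M + N) (i j m : ℕ) (hi : 1 ≤ i) (hij : i ≤ j) (hm : 1 ≤ m) :
    Tendsto
      (fun β : ℝ =>
        (let r : ℝ := 1 / (1 - β)
         let x : ℝ := q ^ ((1 - β) / 2)
         let a : ℝ := ((N : ℝ) + 1) * r + (M : ℝ) - (N : ℝ)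
         (1 / (m : ℝ)) * qint x ((r - 1) * m) * qint x (r * m) * qint x ((i : ℝ) * m) *
             qint x ((a - (j : ℝ)) * m) * (x - x⁻¹) ^ 2 /
           (qint x (m : ℝ) * qint x (a * m))) / β)
      (𝓝[>] (0 : ℝ))
      (𝓝 (-Real.log q * (q - q⁻¹) * qint q ((i : ℝ) * m / 2) *
        qint q (((j : ℝ) - (M : ℝ) - 1) * m / 2) / qint q (((M : ℝ) + 1) * m / 2))) := by
  set L := Real.log q with hLdef
  have hL : L ≠ 0 := (Real.log_neg hq0 hq1).ne
  have hmR : (0:ℝ) < (m:ℝ) := by exact_mod_cast hm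
  have hmne : (m:ℝ) ≠ 0 := hmR.ne'
  have hNMr : (N:ℝ) ≤ (M:ℝ) := by exact_mod_cast hNM
  have hN0 : (0:ℝ) ≤ (N:ℝ) := Nat.cast_nonneg N
  have hE1 : Efun L 1 ≠ 0 := Efun_ne_zero hL one_ne_zero
  have hEm2 : Efun L ((m:ℝ)/2) ≠ 0 := by
    have h : (0:ℝ) < (m:ℝ)/2 := by linarith
    exact Efun_ne_zero hL h.ne'
  have hEM1 : Efun L (((M:ℝ)+1)*(m:ℝ)/2) ≠ 0 := by
    refine Efun_ne_zero hL ?_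
    have : (0:ℝ) < ((M:ℝ)+1)*(m:ℝ)/2 := by positivity
    exact this.ne'
  -- second factor
  set f2 : ℝ → ℝ := fun β =>
    (1/(m:ℝ)) * Efun L ((m:ℝ)/2) * Efun L ((1-β)*((i:ℝ)*(m:ℝ))/2) *
      Efun L ((((N:ℝ)+1)+(1-β)*((M:ℝ)-(N:ℝ)-(j:ℝ)))*(m:ℝ)/2) /
    (Efun L ((1-β)*(m:ℝ)/2) * Efun L ((((N:ℝ)+1)+(1-β)*((M:ℝ)-(N:ℝ)))*(m:ℝ)/2)) with hf2
  set V : ℝ := (1/(m:ℝ)) * Efun L ((m:ℝ)/2) * Efun L ((i:ℝ)*(m:ℝ)/2) *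
      (- Efun L (((j:ℝ)-(M:ℝ)-1)*(m:ℝ)/2)) /
    (Efun L ((m:ℝ)/2) * Efun L (((M:ℝ)+1)*(m:ℝ)/2)) with hV
  have hf20 : f2 0 = V := by
    rw [hf2, hV]
    simp only
    rw [show (1-(0:ℝ))*((i:ℝ)*(m:ℝ))/2 = (i:ℝ)*(m:ℝ)/2 by ring,
      show ((((N:ℝ)+1)+(1-(0:ℝ))*((M:ℝ)-(N:ℝ)-(j:ℝ)))*(m:ℝ)/2)
        = -(((j:ℝ)-(M:ℝ)-1)*(m:ℝ)/2) by ring,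
      show (1-(0:ℝ))*(m:ℝ)/2 = (m:ℝ)/2 by ring,
      show ((((N:ℝ)+1)+(1-(0:ℝ))*((M:ℝ)-(N:ℝ)))*(m:ℝ)/2) = ((M:ℝ)+1)*(m:ℝ)/2 by ring,
      Efun_neg]
  have limB : Tendsto f2 (𝓝[>] (0:ℝ)) (𝓝 V) := by
    rw [← hf20]
    refine Tendsto.mono_left ?_ nhdsWithin_le_nhds
    refine (ContinuousAt.div ?_ ?_ ?_)
    · unfold Efun; fun_prop
    · unfold Efun; fun_prop
    · refine mul_ne_zero (Efun_ne_zero hL ?_) (Efun_ne_zero hL ?_)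
      · have h : (0:ℝ) < (1-(0:ℝ))*(m:ℝ)/2 := by linarith
        exact h.ne'
      · have h : (0:ℝ) < (((N:ℝ)+1)+(1-(0:ℝ))*((M:ℝ)-(N:ℝ)))*(m:ℝ)/2 := by nlinarith
        exact h.ne'
  -- first factor: derivative
  have hd : HasDerivAt (fun β : ℝ => Efun L (β * ((m:ℝ)/2))) ((m:ℝ)*L) 0 := by
    have h1 : HasDerivAt (fun β : ℝ => L * (β * ((m:ℝ)/2))) (L * ((m:ℝ)/2)) 0 := by
      simpa using (hasDerivAt_mul_const ((m:ℝ)/2)).const_mul L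
    have h2 := (Real.hasDerivAt_exp (L * ((0:ℝ) * ((m:ℝ)/2)))).comp 0 h1
    have h3 := (Real.hasDerivAt_exp (-(L * ((0:ℝ) * ((m:ℝ)/2))))).comp 0 h1.neg
    have h4 := h2.sub h3
    unfold Efun
    refine h4.congr_deriv ?_
    norm_num
    ring
  have limA : Tendsto (fun β : ℝ => Efun L (β * ((m:ℝ)/2)) / β) (𝓝[>] (0:ℝ))
      (𝓝 ((m:ℝ)*L)) := by
    have hslope := hasDerivAt_iff_tendsto_slope.mp hd
    have hsub : 𝓝[>](0:ℝ) ≤ 𝓝[≠](0:ℝ) :=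
      nhdsWithin_mono 0 (fun x hx => Set.mem_compl_singleton_iff.mpr (ne_of_gt hx))
    refine (hslope.mono_left hsub).congr (fun β => ?_)
    simp [slope, Efun_zero, div_eq_inv_mul]
  have key : Tendsto (fun β : ℝ => (Efun L (β * ((m:ℝ)/2)) / β) * f2 β) (𝓝[>] (0:ℝ))
      (𝓝 ((m:ℝ)*L * V)) := limA.mul limB
  have hval : -L * (q - q⁻¹) * qint q ((i : ℝ) * m / 2) *
      qint q (((j : ℝ) - (M : ℝ) - 1) * m / 2) / qint q (((M : ℝ) + 1) * m / 2)
      = (m:ℝ)*L * V := by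
    rw [qint_base q hq0, qint_base q hq0, qint_base q hq0, base_sub_inv q hq0, hV, ← hLdef]
    rw [show ((M:ℝ)+1)*(m:ℝ)/2 = ((M:ℝ)+1)*(m:ℝ)/2 from rfl]
    field_simp
  rw [hval]
  refine key.congr' ?_
  filter_upwards [Ioo_mem_nhdsGT_of_mem (by norm_num : (0:ℝ) ∈ Set.Ico (0:ℝ) 1)] with β hβ
  obtain ⟨hβ0, hβ1⟩ := hβ
  have h1β : (0:ℝ) < 1 - β := by linarith
  have h1βne : (1:ℝ) - β ≠ 0 := h1β.ne'
  have hβne : β ≠ 0 := hβ0.ne'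
  have hEt : Efun L ((1-β)/2) ≠ 0 := by
    have h : (0:ℝ) < (1-β)/2 := by linarith
    exact Efun_ne_zero hL h.ne'
  have hEtm : Efun L ((1-β)*(m:ℝ)/2) ≠ 0 := by
    have h : (0:ℝ) < (1-β)*(m:ℝ)/2 := by
      have := mul_pos h1β hmR; linarith
    exact Efun_ne_zero hL h.ne'
  have hEta : Efun L ((((N:ℝ)+1)+(1-β)*((M:ℝ)-(N:ℝ)))*(m:ℝ)/2) ≠ 0 := by
    have hA : (0:ℝ) < ((N:ℝ)+1)+(1-β)*((M:ℝ)-(N:ℝ)) := by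
      have := mul_nonneg h1β.le (sub_nonneg.mpr hNMr); linarith
    have h : (0:ℝ) < (((N:ℝ)+1)+(1-β)*((M:ℝ)-(N:ℝ)))*(m:ℝ)/2 := by
      have := mul_pos hA hmR; linarith
    exact Efun_ne_zero hL h.ne'
  simp only [qint_rpow q hq0, rpow_sub_inv q hq0, ← hLdef, hf2]
  rw [show (1-β)/2 * ((1/(1-β) - 1) * (m:ℝ)) = β * ((m:ℝ)/2) by field_simp; ring,
    show (1-β)/2 * (1/(1-β) * (m:ℝ)) = (m:ℝ)/2 by field_simp,
    show (1-β)/2 * ((i:ℝ) * (m:ℝ)) = (1-β)*((i:ℝ)*(m:ℝ))/2 by ring,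
    show (1-β)/2 * ((((N:ℝ)+1) * (1/(1-β)) + (M:ℝ) - (N:ℝ) - (j:ℝ)) * (m:ℝ))
      = (((N:ℝ)+1)+(1-β)*((M:ℝ)-(N:ℝ)-(j:ℝ)))*(m:ℝ)/2 by field_simp; ring,
    show (1-β)/2 * (m:ℝ) = (1-β)*(m:ℝ)/2 by ring,
    show (1-β)/2 * ((((N:ℝ)+1) * (1/(1-β)) + (M:ℝ) - (N:ℝ)) * (m:ℝ))
      = (((N:ℝ)+1)+(1-β)*((M:ℝ)-(N:ℝ)))*(m:ℝ)/2 by field_simp; ring]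
  field_simp
end
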